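/- Let p be a prime and F ⊆ L number fields with L/F a Galois extension of odd degree. Fix d ∈ ℕ, an integer d_v for each finite place v of F above p, and an integer d_v⁺ for each real place v of F; for a finite place w of L above p set d_w := d_v with v the place of F below w, and for a real place w of L set d_w⁺ := d_v⁺ with v the real place of F below w (such v is real since L/F is Galois of odd degree). If ∑_{v|p} (d − d_v)·[F_v : ℚ_p] = d·r₂(F) + ∑_{v real} (d − d_v⁺), then ∑_{w|p} (d − d_w)·[L_w : ℚ_p] = d·r₂(L) + ∑_{w real} (d − d_w⁺). -/

import Mathlib

/-!
STATEMENT 4: Let p be a prime and F ⊆ L number fields with L/F a Galois extension of odd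
degree.  Fix d ∈ ℕ, an integer d_v for each finite place v of F above p, and an integer
d_v⁺ for each real place v of F; for a finite place w of L above p set d_w := d_v with v
the place of F below w, and for a real place w of L set d_w⁺ := d_v⁺ with v the real place
of F below w (such v is real since L/F is Galois of odd degree).  If
∑_{v|p} (d − d_v)·[F_v : ℚ_p] = d·r₂(F) + ∑_{v real} (d − d_v⁺), then
∑_{w|p} (d − d_w)·[L_w : ℚ_p] = d·r₂(L) + ∑_{w real} (d − d_w⁺).
-/

open NumberField

/-- A finite place of a number field `K` above the rational prime `p`: a nonzero prime
ideal of the ring of integers of `K` containing `p`. -/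
def IsFinitePlaceAbove (p : ℕ) (K : Type*) [Field K] [NumberField K]
    (w : Ideal (𝓞 K)) : Prop :=
  w.IsPrime ∧ w ≠ ⊥ ∧ (p : 𝓞 K) ∈ w

/-- The local degree `[K_w : ℚ_p] = e(w|p) · f(w|p)`, the product of the ramification index
and the residue class degree of `w` over `p`. -/
noncomputable def localDegree (p : ℕ) (K : Type*) [Field K] [NumberField K]
    (w : Ideal (𝓞 K)) : ℕ :=
  Ideal.ramificationIdx' (Ideal.span {(p : ℤ)}) w *
    Ideal.inertiaDeg' (Ideal.span {(p : ℤ)}) w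

section Aux

open Ideal UniqueFactorizationMonoid
open scoped Classical

variable (p : ℕ) (K : Type*) [Field K] [NumberField K]

/-- The ideal `p·𝓞K`. -/
noncomputable def pIdeal : Ideal (𝓞 K) :=
  Ideal.map (algebraMap ℤ (𝓞 K)) (Ideal.span {(p : ℤ)})

lemma pIdeal_eq : pIdeal p K = Ideal.span {(p : 𝓞 K)} := by
  rw [pIdeal, Ideal.map_span, Set.image_singleton, map_natCast]

variable {p}

lemma pIdeal_ne_bot (hp : p.Prime) : pIdeal p K ≠ ⊥ := by
  rw [pIdeal_eq, Ne, Ideal.span_singleton_eq_bot]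
  exact_mod_cast Nat.cast_ne_zero (R := 𝓞 K) |>.mpr hp.ne_zero

lemma mem_factors_pIdeal_iff (hp : p.Prime) (w : Ideal (𝓞 K)) :
    w ∈ (factors (pIdeal p K)).toFinset ↔ IsFinitePlaceAbove p K w := by
  rw [Multiset.mem_toFinset, factors_eq_normalizedFactors,
    Ideal.mem_normalizedFactors_iff (pIdeal_ne_bot K hp), pIdeal_eq,
    Ideal.span_singleton_le_iff_mem]
  constructor
  · rintro ⟨h1, h2⟩
    refine ⟨h1, fun hb => ?_, h2⟩
    rw [hb, Ideal.mem_bot] at h2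
    exact (Nat.cast_ne_zero (R := 𝓞 K) |>.mpr hp.ne_zero) h2
  · rintro ⟨h1, _, h3⟩
    exact ⟨h1, h3⟩

end Aux

section Real

open NumberField.InfinitePlace
open scoped Classical

variable {F L : Type*} [Field F] [NumberField F] [Field L] [NumberField L] [Algebra F L]

lemma isReal_iff_isReal_comap [IsUnramifiedAtInfinitePlaces F L] (w : InfinitePlace L) :
    w.IsReal ↔ (w.comap (algebraMap F L)).IsReal := by
  have h := (w.isUnramified F).eq
  constructor
  · intro h'
    by_contra h''
    rw [InfinitePlace.mult, InfinitePlace.mult, if_pos h', if_neg h''] at h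
    omega
  · intro h'
    by_contra h''
    rw [InfinitePlace.mult, InfinitePlace.mult, if_pos h', if_neg h''] at h
    omega

open Finset in
lemma card_comap_fiber [IsGalois F L] [IsUnramifiedAtInfinitePlaces F L]
    (v : InfinitePlace F) :
    #(Finset.univ.filter fun w : InfinitePlace L => w.comap (algebraMap F L) = v) =
      Module.finrank F L := by
  classical
  obtain ⟨w, rfl⟩ := comap_surjective (K := L) v
  trans #(MulAction.orbit (L ≃ₐ[F] L) w).toFinset
  · congr 1
    ext w'
    simp only [mem_filter, mem_univ, true_and, Set.mem_toFinset, MulAction.mem_orbit_iff]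
    constructor
    · intro h
      obtain ⟨σ, hσ⟩ := exists_smul_eq_of_comap_eq h
      exact ⟨σ⁻¹, by rw [inv_smul_eq_iff, hσ]⟩
    · rintro ⟨σ, rfl⟩
      rw [comap_smul]
      congr 1
      ext x
      exact σ.symm.commutes x
  · rw [Set.toFinset_card, ← IsGalois.card_aut_eq_finrank F L, Nat.card_eq_fintype_card,
      ← MulAction.card_orbit_mul_card_stabilizer_eq_card_group (L ≃ₐ[F] L) w,
      ← Nat.card_eq_fintype_card (α := MulAction.stabilizer (L ≃ₐ[F] L) w), card_stabilizer,
      if_pos (w.isUnramified F), mul_one]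

end Real


section Fiber

open Ideal UniqueFactorizationMonoid
open scoped Classical

variable {p : ℕ} {F L : Type*} [Field F] [NumberField F] [Field L] [NumberField L] [Algebra F L]

lemma algebraMap_rings_injective :
    Function.Injective (algebraMap (𝓞 F) (𝓞 L)) := by
  haveI : IsScalarTower (𝓞 F) (𝓞 L) L := IsScalarTower.of_algebraMap_eq' rfl
  have h1 : Function.Injective (algebraMap (𝓞 F) L) := by
    rw [IsScalarTower.algebraMap_eq (𝓞 F) F L]
    exact (algebraMap F L).injective.comp (IsFractionRing.injective (𝓞 F) F)
  intro x y h
  apply h1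
  rw [IsScalarTower.algebraMap_eq (𝓞 F) (𝓞 L) L, RingHom.comp_apply, RingHom.comp_apply, h]

lemma isFinitePlaceAbove_comap (hp : p.Prime) {w : Ideal (𝓞 L)}
    (hw : IsFinitePlaceAbove p L w) :
    IsFinitePlaceAbove p F (Ideal.comap (algebraMap (𝓞 F) (𝓞 L)) w) := by
  obtain ⟨h1, h2, h3⟩ := hw
  have hmem : (p : 𝓞 F) ∈ Ideal.comap (algebraMap (𝓞 F) (𝓞 L)) w := by
    rw [Ideal.mem_comap, map_natCast]; exact h3
  haveI := h1
  refine ⟨Ideal.comap_isPrime _ w, fun hb => ?_, hmem⟩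
  rw [hb, Ideal.mem_bot] at hmem
  exact (Nat.cast_ne_zero (R := 𝓞 F) |>.mpr hp.ne_zero) hmem

lemma map_ne_bot_of_ne_bot' {v : Ideal (𝓞 F)} (hv : v ≠ ⊥) :
    Ideal.map (algebraMap (𝓞 F) (𝓞 L)) v ≠ ⊥ := by
  rwa [Ne, Ideal.map_eq_bot_iff_of_injective (algebraMap_rings_injective (F := F) (L := L))]

lemma fiber_eq (hp : p.Prime) {v : Ideal (𝓞 F)} (hv : IsFinitePlaceAbove p F v) :
    ((factors (pIdeal p L)).toFinset.filter
      (fun w => Ideal.comap (algebraMap (𝓞 F) (𝓞 L)) w = v)) =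
    (factors (Ideal.map (algebraMap (𝓞 F) (𝓞 L)) v)).toFinset := by
  have hvmax : v.IsMaximal := Ideal.IsPrime.isMaximal hv.1 hv.2.1
  ext w
  rw [Finset.mem_filter, mem_factors_pIdeal_iff L hp, Multiset.mem_toFinset,
    factors_eq_normalizedFactors,
    Ideal.mem_normalizedFactors_iff (map_ne_bot_of_ne_bot' hv.2.1), Ideal.map_le_iff_le_comap]
  constructor
  · rintro ⟨⟨h1, h2, h3⟩, h4⟩
    exact ⟨h1, le_of_eq h4.symm⟩
  · rintro ⟨h1, h2⟩
    haveI := h1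
    have hne : Ideal.comap (algebraMap (𝓞 F) (𝓞 L)) w ≠ ⊤ := by
      intro h
      refine h1.ne_top ((Ideal.eq_top_iff_one w).mpr ?_)
      have : (1 : 𝓞 F) ∈ Ideal.comap (algebraMap (𝓞 F) (𝓞 L)) w := h ▸ Submodule.mem_top
      rwa [Ideal.mem_comap, map_one] at this
    have hcom : v = Ideal.comap (algebraMap (𝓞 F) (𝓞 L)) w := hvmax.eq_of_le hne h2
    have hpmem : (p : 𝓞 L) ∈ w := by
      have : (p : 𝓞 F) ∈ Ideal.comap (algebraMap (𝓞 F) (𝓞 L)) w := hcom ▸ hv.2.2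
      rwa [Ideal.mem_comap, map_natCast] at this
    refine ⟨⟨h1, fun hb => ?_, hpmem⟩, hcom.symm⟩
    rw [hb, Ideal.mem_bot] at hpmem
    exact (Nat.cast_ne_zero (R := 𝓞 L) |>.mpr hp.ne_zero) hpmem


lemma comap_to_int_eq (hp : p.Prime) {v : Ideal (𝓞 F)} (hv : IsFinitePlaceAbove p F v) :
    Ideal.comap (algebraMap ℤ (𝓞 F)) v = Ideal.span {(p : ℤ)} := by
  have hspan : (Ideal.span {(p : ℤ)}).IsMaximal :=
    PrincipalIdealRing.isMaximal_of_irreducible (Nat.prime_iff_prime_int.mp hp).irreducible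
  haveI := hv.1
  have hle : Ideal.span {(p : ℤ)} ≤ Ideal.comap (algebraMap ℤ (𝓞 F)) v := by
    rw [Ideal.span_singleton_le_iff_mem, Ideal.mem_comap, map_natCast]
    exact hv.2.2
  have hne : Ideal.comap (algebraMap ℤ (𝓞 F)) v ≠ ⊤ := by
    intro h
    refine hv.1.ne_top ((Ideal.eq_top_iff_one v).mpr ?_)
    have : (1 : ℤ) ∈ Ideal.comap (algebraMap ℤ (𝓞 F)) v := h ▸ Submodule.mem_top
    rwa [Ideal.mem_comap, map_one] at this
  exact (hspan.eq_of_le hne hle).symm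

lemma sum_localDegree_fiber (hp : p.Prime) {v : Ideal (𝓞 F)} (hv : IsFinitePlaceAbove p F v) :
    ∑ w ∈ (factors (Ideal.map (algebraMap (𝓞 F) (𝓞 L)) v)).toFinset, localDegree p L w
      = Module.finrank F L * localDegree p F v := by
  haveI : IsScalarTower (𝓞 F) (𝓞 L) L := IsScalarTower.of_algebraMap_eq' rfl
  haveI : Module.Finite (𝓞 F) (𝓞 L) := Module.IsNoetherian.finite _ _
  haveI hvp := hv.1
  haveI hvmax : v.IsMaximal := Ideal.IsPrime.isMaximal hv.1 hv.2.1
  haveI hspan : (Ideal.span {(p : ℤ)}).IsMaximal :=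
    PrincipalIdealRing.isMaximal_of_irreducible (Nat.prime_iff_prime_int.mp hp).irreducible
  haveI : v.LiesOver (Ideal.span {(p : ℤ)}) := ⟨(comap_to_int_eq hp hv).symm⟩
  have hsum := Ideal.sum_ramification_inertia (R := 𝓞 F) (S := 𝓞 L) (p := v) F L hv.2.1
  rw [← hsum, Finset.sum_mul]
  refine Finset.sum_congr rfl (fun w hw => ?_)
  rw [Multiset.mem_toFinset, factors_eq_normalizedFactors,
    Ideal.mem_normalizedFactors_iff (map_ne_bot_of_ne_bot' hv.2.1)] at hw
  obtain ⟨hwp, hle⟩ := hw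
  haveI := hwp
  have hwv : v = Ideal.comap (algebraMap (𝓞 F) (𝓞 L)) w := by
    have hne : Ideal.comap (algebraMap (𝓞 F) (𝓞 L)) w ≠ ⊤ := by
      intro h
      refine hwp.ne_top ((Ideal.eq_top_iff_one w).mpr ?_)
      have : (1 : 𝓞 F) ∈ Ideal.comap (algebraMap (𝓞 F) (𝓞 L)) w := h ▸ Submodule.mem_top
      rwa [Ideal.mem_comap, map_one] at this
    exact hvmax.eq_of_le hne (Ideal.map_le_iff_le_comap.mp hle)
  haveI : w.LiesOver v := ⟨hwv⟩
  have he : Ideal.ramificationIdx' (Ideal.span {(p : ℤ)}) w =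
      Ideal.ramificationIdx' (Ideal.span {(p : ℤ)}) v *
        Ideal.ramificationIdx' v w :=
    Ideal.ramificationIdx'_algebra_tower (map_ne_bot_of_ne_bot' hv.2.1)
      (pIdeal_ne_bot L hp) hle
  have hf : Ideal.inertiaDeg' (Ideal.span {(p : ℤ)}) w =
      Ideal.inertiaDeg' (Ideal.span {(p : ℤ)}) v *
        Ideal.inertiaDeg' v w :=
    Ideal.inertiaDeg'_algebra_tower (Ideal.span {(p : ℤ)}) v w
  rw [localDegree, localDegree, he, hf]
  ring

end Fiber

theorem data_equality_base_change_of_odd_galois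
    (p : ℕ) (hp : p.Prime)
    (F L : Type*) [Field F] [NumberField F] [Field L] [NumberField L] [Algebra F L]
    [IsGalois F L] (hodd : Odd (Module.finrank F L))
    (d : ℕ) (dv : Ideal (𝓞 F) → ℤ) (dplus : InfinitePlace F → ℤ)
    (hF : ∑ᶠ v : {v : Ideal (𝓞 F) // IsFinitePlaceAbove p F v},
            (((d : ℤ) - dv v.1) * localDegree p F v.1) =
          (d : ℤ) * InfinitePlace.nrComplexPlaces F +
            ∑ᶠ v : {v : InfinitePlace F // v.IsReal}, ((d : ℤ) - dplus v)) :
    ∑ᶠ w : {w : Ideal (𝓞 L) // IsFinitePlaceAbove p L w},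
        (((d : ℤ) - dv (Ideal.comap (algebraMap (𝓞 F) (𝓞 L)) w.1)) * localDegree p L w.1) =
      (d : ℤ) * InfinitePlace.nrComplexPlaces L +
        ∑ᶠ w : {w : InfinitePlace L // w.IsReal},
          ((d : ℤ) - dplus ((w : InfinitePlace L).comap (algebraMap F L))) := by
  classical
  haveI : IsUnramifiedAtInfinitePlaces F L := IsUnramifiedAtInfinitePlaces_of_odd_finrank hodd
  haveI fpF : Fintype {v : Ideal (𝓞 F) // IsFinitePlaceAbove p F v} :=
    Fintype.subtype _ (mem_factors_pIdeal_iff F hp)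
  haveI fpL : Fintype {w : Ideal (𝓞 L) // IsFinitePlaceAbove p L w} :=
    Fintype.subtype _ (mem_factors_pIdeal_iff L hp)
  set n := Module.finrank F L with hn
  set SF := (UniqueFactorizationMonoid.factors (pIdeal p F)).toFinset with hSF
  set SL := (UniqueFactorizationMonoid.factors (pIdeal p L)).toFinset with hSL
  -- convert hypothesis to finset sums
  rw [finsum_eq_sum_of_fintype, finsum_eq_sum_of_fintype,
    ← Finset.sum_subtype SF (mem_factors_pIdeal_iff F hp)
      (fun v => ((d : ℤ) - dv v) * localDegree p F v),
    ← Finset.sum_subtype (Finset.univ.filter (fun v : InfinitePlace F => v.IsReal))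
      (fun v => by simp) (fun v => (d : ℤ) - dplus v)] at hF
  -- convert goal to finset sums
  rw [finsum_eq_sum_of_fintype, finsum_eq_sum_of_fintype,
    ← Finset.sum_subtype SL (mem_factors_pIdeal_iff L hp)
      (fun w => ((d : ℤ) - dv (Ideal.comap (algebraMap (𝓞 F) (𝓞 L)) w)) * localDegree p L w),
    ← Finset.sum_subtype (Finset.univ.filter (fun w : InfinitePlace L => w.IsReal))
      (fun w => by simp) (fun w => (d : ℤ) - dplus (w.comap (algebraMap F L)))]
  -- the infinite-place weight function
  set c : InfinitePlace F → ℤ := fun v => if v.IsReal then (d : ℤ) - dplus v else (d : ℤ) with hc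
  -- cardinality of complex places as a filter
  have hcardF : (Finset.univ.filter (fun v : InfinitePlace F => ¬ v.IsReal)).card =
        InfinitePlace.nrComplexPlaces F := by
    rw [InfinitePlace.nrComplexPlaces, Fintype.card_subtype]
    congr 1
    ext v
    simp [InfinitePlace.not_isReal_iff_isComplex]
  have hcardL : (Finset.univ.filter (fun w : InfinitePlace L => ¬ w.IsReal)).card =
        InfinitePlace.nrComplexPlaces L := by
    rw [InfinitePlace.nrComplexPlaces, Fintype.card_subtype]
    congr 1
    ext v
    simp [InfinitePlace.not_isReal_iff_isComplex]
  -- splitting lemma for F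
  have hsplitF : ∑ v : InfinitePlace F, c v =
      (d : ℤ) * InfinitePlace.nrComplexPlaces F +
        ∑ v ∈ Finset.univ.filter (fun v : InfinitePlace F => v.IsReal), ((d : ℤ) - dplus v) := by
    rw [← Finset.sum_filter_add_sum_filter_not Finset.univ (fun v : InfinitePlace F => v.IsReal) c,
      add_comm]
    congr 1
    · rw [Finset.sum_congr rfl (fun v hv => if_neg (Finset.mem_filter.mp hv).2),
        Finset.sum_const, hcardF, nsmul_eq_mul, mul_comm]
    · exact Finset.sum_congr rfl fun v hv => if_pos (Finset.mem_filter.mp hv).2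
  -- splitting lemma for L
  have hsplitL : ∑ w : InfinitePlace L, c (w.comap (algebraMap F L)) =
      (d : ℤ) * InfinitePlace.nrComplexPlaces L +
        ∑ w ∈ Finset.univ.filter (fun w : InfinitePlace L => w.IsReal),
          ((d : ℤ) - dplus (w.comap (algebraMap F L))) := by
    rw [← Finset.sum_filter_add_sum_filter_not Finset.univ (fun w : InfinitePlace L => w.IsReal)
      (fun w => c (w.comap (algebraMap F L))), add_comm]
    congr 1
    · have hnr : ∀ w ∈ Finset.univ.filter (fun w : InfinitePlace L => ¬ w.IsReal),
          c (w.comap (algebraMap F L)) = (d : ℤ) := fun w hw =>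
        if_neg (fun h => (Finset.mem_filter.mp hw).2 ((isReal_iff_isReal_comap w).mpr h))
      rw [Finset.sum_congr rfl hnr, Finset.sum_const, hcardL, nsmul_eq_mul, mul_comm]
    · exact Finset.sum_congr rfl fun w hw =>
        if_pos ((isReal_iff_isReal_comap w).mp (Finset.mem_filter.mp hw).2)
  -- fiberwise counting for infinite places
  have hinfL : ∑ w : InfinitePlace L, c (w.comap (algebraMap F L)) =
      (n : ℤ) * ∑ v : InfinitePlace F, c v := by
    rw [← Finset.sum_fiberwise_of_maps_to
      (g := fun w : InfinitePlace L => w.comap (algebraMap F L))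
      (fun w _ => Finset.mem_univ _) (fun w => c (w.comap (algebraMap F L))),
      Finset.mul_sum]
    refine Finset.sum_congr rfl fun v _ => ?_
    rw [Finset.sum_congr rfl (fun w hw => by rw [(Finset.mem_filter.mp hw).2]),
      Finset.sum_const, card_comap_fiber v, nsmul_eq_mul]
  -- fiberwise counting for finite places
  have hfin : ∑ w ∈ SL, (((d : ℤ) - dv (Ideal.comap (algebraMap (𝓞 F) (𝓞 L)) w)) *
        localDegree p L w) =
      (n : ℤ) * ∑ v ∈ SF, (((d : ℤ) - dv v) * localDegree p F v) := by
    have hmaps : ∀ w ∈ SL, Ideal.comap (algebraMap (𝓞 F) (𝓞 L)) w ∈ SF := fun w hw =>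
      (mem_factors_pIdeal_iff F hp _).mpr
        (isFinitePlaceAbove_comap hp ((mem_factors_pIdeal_iff L hp w).mp hw))
    rw [← Finset.sum_fiberwise_of_maps_to hmaps
      (fun w => ((d : ℤ) - dv (Ideal.comap (algebraMap (𝓞 F) (𝓞 L)) w)) * localDegree p L w),
      Finset.mul_sum]
    refine Finset.sum_congr rfl fun v hv => ?_
    have hvP : IsFinitePlaceAbove p F v := (mem_factors_pIdeal_iff F hp v).mp hv
    rw [Finset.sum_congr rfl (fun w hw => by rw [(Finset.mem_filter.mp hw).2]),
      fiber_eq hp hvP, ← Finset.mul_sum, ← Nat.cast_sum, sum_localDegree_fiber hp hvP]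
    push_cast
    ring
  rw [hfin, hF, ← hsplitF, ← hinfL, hsplitL]
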